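/- Let H_r Λᵏ denote the space of differential k-forms on ℝ^{n+1} with homogeneous polynomial coefficients of degree r, and X = Σᵢ xᵢ ∂/∂xᵢ. Suppose (r, k) ≠ (0, 0). If α ∈ H_r Λᵏ satisfies i_X α = 0, then α = i_X((r+k)^{-1} dα); in particular α lies in i_X(H_{r−1} Λ^{k+1}). Hence the sequence H_{r+1}Λ^{k−1} ← H_r Λᵏ ← H_{r−1}Λ^{k+1} with maps i_X is exact at H_r Λᵏ. -/

import Mathlib

open scoped BigOperators
open Classical

namespace FEEC

variable {M : Type*} [AddCommGroup M] [Module ℝ M]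

/-- The wedge product of two real-valued alternating maps. -/
noncomputable def wedge {k l : ℕ} (α : M [⋀^Fin k]→ₗ[ℝ] ℝ) (β : M [⋀^Fin l]→ₗ[ℝ] ℝ) :
    M [⋀^Fin (k + l)]→ₗ[ℝ] ℝ :=
  (((TensorProduct.lid ℝ ℝ).toLinearMap).compAlternatingMap (α.domCoprod β)).domDomCongr
    finSumFinEquiv

/-- A linear functional, regarded as an alternating 1-form. -/
noncomputable def oneForm (θ : M →ₗ[ℝ] ℝ) : M [⋀^Fin 1]→ₗ[ℝ] ℝ :=
  AlternatingMap.ofSubsingleton ℝ M ℝ (0 : Fin 1) θ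

/-- Left exterior multiplication of a `k`-form by the 1-form `θ`. -/
noncomputable def lwedge {k : ℕ} (θ : M →ₗ[ℝ] ℝ) (α : M [⋀^Fin k]→ₗ[ℝ] ℝ) :
    M [⋀^Fin (k + 1)]→ₗ[ℝ] ℝ :=
  (wedge (oneForm θ) α).domDomCongr (finCongr (Nat.add_comm 1 k))

/-- Reinterpret a `k`-form as an `l`-form along an equality `k = l`. -/
noncomputable def castForm {k l : ℕ} (h : k = l) (α : M [⋀^Fin k]→ₗ[ℝ] ℝ) :
    M [⋀^Fin l]→ₗ[ℝ] ℝ :=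
  α.domDomCongr (finCongr h)

/-- The wedge product of a family of covectors, `θ₁ ∧ ⋯ ∧ θₖ`; its value on
`(v₁, …, v_k)` is `det (θᵢ (v_j))`. -/
noncomputable def covWedge {k : ℕ} (φ : Fin k → (M →ₗ[ℝ] ℝ)) : M [⋀^Fin k]→ₗ[ℝ] ℝ :=
  Matrix.detRowAlternating.compLinearMap (LinearMap.pi φ)

/-- Points of `ℝ^N`. -/
abbrev Vec (N : ℕ) := Fin N → ℝ

/-- A differential `k`-form on `ℝ^N`: an alternating-map-valued function. -/
abbrev Form (N k : ℕ) := Vec N → (Vec N [⋀^Fin k]→ₗ[ℝ] ℝ)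

/-- `s = x₁ + ⋯ + x_N`. -/
noncomputable def sFun (N : ℕ) (x : Vec N) : ℝ := ∑ i, x i

/-- The constant 1-form `ds = dx₁ + ⋯ + dx_N`. -/
noncomputable def ds (N : ℕ) : Vec N →ₗ[ℝ] ℝ := ∑ i, LinearMap.proj i

/-- The exterior derivative of a `k`-form at a point, characterized by the standard
coordinate-free formula `(dω)ₓ(v₀,…,v_k) = Σᵢ (-1)ⁱ (∂_{vᵢ} ω)(v₀,…,v̂ᵢ,…,v_k)`
(defined by definite description; junk value `0` if no alternating map satisfies it). -/
noncomputable def extDeriv {N k : ℕ} (ω : Form N k) (x : Vec N) :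
    Vec N [⋀^Fin (k + 1)]→ₗ[ℝ] ℝ :=
  if h : ∃ η : Vec N [⋀^Fin (k + 1)]→ₗ[ℝ] ℝ, ∀ v : Fin (k + 1) → Vec N,
      η v = ∑ i : Fin (k + 1),
        (-1 : ℝ) ^ (i : ℕ) * fderiv ℝ (fun y => ω y (fun j => v (i.succAbove j))) x (v i)
  then h.choose else 0

/-- Interior product with the Euler vector field `X = Σᵢ xᵢ ∂ᵢ` (which at the point `x`
is the vector `x` itself). -/
noncomputable def iEuler {N k : ℕ} (ω : Form N (k + 1)) : Form N k :=
  fun x => (ω x).curryLeft x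

/-- The Lie derivative along the Euler vector field, via Cartan's formula
`𝔏_X = d ∘ i_X + i_X ∘ d` (with `i_X = 0` on 0-forms). -/
noncomputable def lieX {N : ℕ} : ∀ {k : ℕ}, Form N k → Form N k
  | 0, ω => fun x => (extDeriv ω x).curryLeft x
  | (_ + 1), ω => fun x => extDeriv (iEuler ω) x + (extDeriv ω x).curryLeft x

/-- The modified exterior derivative `𝐝 = d − s⁻¹ ds ∧ 𝔏_X`. -/
noncomputable def bd {N k : ℕ} (ω : Form N k) : Form N (k + 1) :=
  fun x => extDeriv ω x - (sFun N x)⁻¹ • lwedge (ds N) (lieX ω x)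

/-- `ω` has coefficients that are homogeneous polynomials of degree `r`. -/
def HomPolyForm {N k : ℕ} (r : ℕ) (ω : Form N k) : Prop :=
  ∀ v : Fin k → Vec N, ∃ P : MvPolynomial (Fin N) ℝ,
    P.IsHomogeneous r ∧ ∀ x, MvPolynomial.eval x P = ω x v

/-- The inner product of two `k`-forms induced (via Gram determinants) by the diagonal
metric `⟨dxᵢ, dxᵢ⟩ = xᵢ` at the point `x`: explicitly
`⟨α, β⟩ = Σ_{i₁<⋯<i_k} x_{i₁}⋯x_{i_k} α(e_{i₁},…,e_{i_k}) β(e_{i₁},…,e_{i_k})`. -/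
noncomputable def gInner {N k : ℕ} (x : Vec N) (α β : Vec N [⋀^Fin k]→ₗ[ℝ] ℝ) : ℝ :=
  ∑ s : Finset (Fin N), if h : s.card = k then
    (∏ i ∈ s, x i) * α (fun j => Pi.single ((s.orderIsoOfFin h j : Fin N)) 1)
      * β (fun j => Pi.single ((s.orderIsoOfFin h j : Fin N)) 1)
  else 0

/-- The standard Euclidean volume form `dx₁ ∧ ⋯ ∧ dx_N`. -/
noncomputable def vol (N : ℕ) : Vec N [⋀^Fin N]→ₗ[ℝ] ℝ := Matrix.detRowAlternating

/-- The modified Hodge star `*_g` at the point `x`: the unique `l`-form `γ` with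
`α ∧ γ = ⟨α, β⟩_g vol` for all `k`-forms `α` (junk value `0` if none exists). -/
noncomputable def hodge {N k l : ℕ} (h : k + l = N) (x : Vec N)
    (β : Vec N [⋀^Fin k]→ₗ[ℝ] ℝ) : Vec N [⋀^Fin l]→ₗ[ℝ] ℝ :=
  if H : ∃ γ : Vec N [⋀^Fin l]→ₗ[ℝ] ℝ, ∀ α : Vec N [⋀^Fin k]→ₗ[ℝ] ℝ,
      castForm h (wedge α γ) = gInner x α β • vol N
  then H.choose else 0

/-- Pullback (restriction) of a `k`-form to the `i`-th coordinate hyperplane `{xᵢ = 0}`. -/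
noncomputable def faceRestrict {N k : ℕ} (i : Fin N) (α : Vec N [⋀^Fin k]→ₗ[ℝ] ℝ) :
    (LinearMap.ker (LinearMap.proj i : Vec N →ₗ[ℝ] ℝ)) [⋀^Fin k]→ₗ[ℝ] ℝ :=
  α.compLinearMap (LinearMap.ker (LinearMap.proj i : Vec N →ₗ[ℝ] ℝ)).subtype

section Poly

open MvPolynomial

variable {N : ℕ}

/-- The derivative of the evaluation of a multivariate polynomial, as a CLM. -/
noncomputable def polyD (P : MvPolynomial (Fin N) ℝ) (x : Vec N) : Vec N →L[ℝ] ℝ :=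
  ∑ m, MvPolynomial.eval x (MvPolynomial.pderiv m P) • (ContinuousLinearMap.proj m : Vec N →L[ℝ] ℝ)

lemma polyD_apply (P : MvPolynomial (Fin N) ℝ) (x u : Vec N) :
    polyD P x u = ∑ m, MvPolynomial.eval x (MvPolynomial.pderiv m P) * u m := by
  simp [polyD]

lemma hasFDerivAt_eval (x : Vec N) (P : MvPolynomial (Fin N) ℝ) :
    HasFDerivAt (fun y => MvPolynomial.eval y P) (polyD P x) x := by
  induction P using MvPolynomial.induction_on with
  | C a =>
      have h1 : polyD (C a : MvPolynomial (Fin N) ℝ) x = 0 := by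
        simp [polyD, pderiv_C]
      have h2 : (fun y : Vec N => MvPolynomial.eval y (C a : MvPolynomial (Fin N) ℝ))
          = fun _ => a := by funext y; simp
      rw [h1, h2]
      exact hasFDerivAt_const a x
  | add p q hp hq =>
      have h1 : polyD (p + q) x = polyD p x + polyD q x := by
        simp [polyD, add_smul, Finset.sum_add_distrib]
      have h2 : (fun y : Vec N => MvPolynomial.eval y (p + q))
          = fun y => MvPolynomial.eval y p + MvPolynomial.eval y q := by
        funext y; simp
      rw [h1, h2]
      exact hp.add hq
  | mul_X p i hp =>
      have h2 : (fun y : Vec N => MvPolynomial.eval y (p * X i))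
          = fun y => MvPolynomial.eval y p * y i := by
        funext y; simp
      have hm := hp.fun_mul ((ContinuousLinearMap.proj i : Vec N →L[ℝ] ℝ).hasFDerivAt)
      rw [h2]
      refine hm.congr_fderiv ?_
      ext u
      rw [polyD_apply]
      simp only [ContinuousLinearMap.add_apply, ContinuousLinearMap.smul_apply,
        ContinuousLinearMap.proj_apply, smul_eq_mul]
      rw [polyD_apply]
      have key : ∀ m : Fin N, MvPolynomial.eval x (MvPolynomial.pderiv m (p * X i)) * u m
          = MvPolynomial.eval x (MvPolynomial.pderiv m p) * u m * x i
            + MvPolynomial.eval x p * (if i = m then u m else 0) := by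
        intro m
        rw [pderiv_mul]
        by_cases h : i = m
        · subst h; rw [pderiv_X_self]; simp; ring
        · rw [pderiv_X_of_ne h]; simp [h]; ring
      rw [Finset.sum_congr rfl fun m _ => key m, Finset.sum_add_distrib, ← Finset.sum_mul,
        ← Finset.mul_sum, Finset.sum_ite_eq Finset.univ i (fun m => u m)]
      simp
      ring

/-- Euler's identity for a single monomial. -/
lemma euler_monomial (x : Vec N) (s : Fin N →₀ ℕ) (a : ℝ) (m : Fin N) :
    MvPolynomial.eval x (MvPolynomial.pderiv m (MvPolynomial.monomial s a)) * x m
      = (s m : ℝ) * MvPolynomial.eval x (MvPolynomial.monomial s a) := by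
  rw [pderiv_monomial]
  by_cases h : s m = 0
  · simp [h]
  · set u := s - Finsupp.single m 1 with hu
    have hle : Finsupp.single m 1 ≤ s := by
      rw [Finsupp.single_le_iff]; omega
    have hs : Finsupp.single m 1 + u = s := by
      rw [hu, add_comm]; exact tsub_add_cancel_of_le hle
    have hmono : (monomial s a : MvPolynomial (Fin N) ℝ) = X m * monomial u a := by
      rw [← hs, monomial_single_add, pow_one]
    have hcoef : (monomial u (a * (s m : ℝ)) : MvPolynomial (Fin N) ℝ)
        = C ((s m : ℝ)) * monomial u a := by
      rw [C_mul_monomial]; ring_nf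
    rw [hcoef, hmono]
    simp only [eval_mul, eval_C, eval_X]
    ring

lemma sum_univ_eq_degree (s : Fin N →₀ ℕ) : ∑ m : Fin N, s m = s.degree :=
  (Finset.sum_subset (Finset.subset_univ _)
    (fun i _ hi => Finsupp.notMem_support_iff.mp hi)).symm

lemma degree_of_mem_support {P : MvPolynomial (Fin N) ℝ} {r : ℕ} (hP : P.IsHomogeneous r)
    {s : Fin N →₀ ℕ} (hs : s ∈ P.support) : s.degree = r := by
  have h1 : (Finsupp.weight 1) s = r := hP (MvPolynomial.mem_support_iff.mp hs)
  rw [Finsupp.degree_eq_weight_one]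
  exact h1

/-- Euler's identity. -/
lemma euler {P : MvPolynomial (Fin N) ℝ} {r : ℕ} (hP : P.IsHomogeneous r) (x : Vec N) :
    ∑ m, MvPolynomial.eval x (MvPolynomial.pderiv m P) * x m
      = (r : ℝ) * MvPolynomial.eval x P := by
  calc ∑ m, MvPolynomial.eval x (MvPolynomial.pderiv m P) * x m
      = ∑ m, ∑ s ∈ P.support,
          MvPolynomial.eval x (MvPolynomial.pderiv m (monomial s (coeff s P))) * x m := by
        refine Finset.sum_congr rfl fun m _ => ?_
        conv_lhs => rw [MvPolynomial.as_sum P]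
        rw [map_sum, map_sum, Finset.sum_mul]
    _ = ∑ s ∈ P.support, (∑ m : Fin N, (s m : ℝ)) * MvPolynomial.eval x (monomial s (coeff s P)) := by
        rw [Finset.sum_comm]
        refine Finset.sum_congr rfl fun s _ => ?_
        rw [Finset.sum_mul]
        exact Finset.sum_congr rfl fun m _ => euler_monomial x s (coeff s P) m
    _ = ∑ s ∈ P.support, (r : ℝ) * MvPolynomial.eval x (monomial s (coeff s P)) := by
        refine Finset.sum_congr rfl fun s hs => ?_
        have : ∑ m : Fin N, (s m : ℝ) = (r : ℝ) := by
          rw [← Nat.cast_sum]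
          norm_cast
          rw [sum_univ_eq_degree]
          exact degree_of_mem_support hP hs
        rw [this]
    _ = (r : ℝ) * MvPolynomial.eval x P := by
        rw [← Finset.mul_sum]
        congr 1
        conv_rhs => rw [MvPolynomial.as_sum P]
        rw [map_sum]

lemma isHomogeneous_pderiv {P : MvPolynomial (Fin N) ℝ} {r : ℕ} (hP : P.IsHomogeneous r)
    (m : Fin N) : (MvPolynomial.pderiv m P).IsHomogeneous (r - 1) := by
  have hrw : MvPolynomial.pderiv m P
      = ∑ s ∈ P.support, MvPolynomial.pderiv m (monomial s (coeff s P)) := by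
    conv_lhs => rw [MvPolynomial.as_sum P]
    rw [map_sum]
  rw [hrw]
  apply MvPolynomial.IsHomogeneous.sum
  intro s hs
  rw [pderiv_monomial]
  by_cases h : s m = 0
  · simp [h]
    exact isHomogeneous_zero _ _ _
  · apply isHomogeneous_monomial
    have hd : s.degree = r := degree_of_mem_support hP hs
    have hle : Finsupp.single m 1 ≤ s := by rw [Finsupp.single_le_iff]; omega
    have hadd : Finsupp.single m 1 + (s - Finsupp.single m 1) = s := by
      rw [add_comm]; exact tsub_add_cancel_of_le hle
    have h1 : (s - Finsupp.single m 1).degree + 1 = r := by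
      rw [← hd, ← sum_univ_eq_degree, ← sum_univ_eq_degree]
      have hterm : ∀ i : Fin N, ((s - Finsupp.single m 1 : Fin N →₀ ℕ)) i
          = s i - (if i = m then 1 else 0) := by
        intro i
        rw [Finsupp.tsub_apply, Finsupp.single_apply]
        congr 1
        simp [eq_comm]
      rw [Finset.sum_congr rfl fun i _ => hterm i]
      rw [← Finset.add_sum_erase _ _ (Finset.mem_univ m),
        ← Finset.add_sum_erase _ s (Finset.mem_univ m)]
      have herase : ∑ i ∈ Finset.univ.erase m, (s i - if i = m then 1 else 0)
          = ∑ i ∈ Finset.univ.erase m, s i := by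
        refine Finset.sum_congr rfl fun i hi => ?_
        rw [if_neg (Finset.mem_erase.mp hi).1]
        omega
      rw [herase]
      simp only [if_true, eq_self_iff_true]
      omega
    omega

end Poly
section Forms

variable {N k r : ℕ}

lemma diff_coeff {α : Form N k} (hα : HomPolyForm r α) (w : Fin k → Vec N) :
    ∃ P : MvPolynomial (Fin N) ℝ, P.IsHomogeneous r ∧
      (fun y => α y w) = fun y => MvPolynomial.eval y P := by
  obtain ⟨P, h1, h2⟩ := hα w
  exact ⟨P, h1, funext fun y => (h2 y).symm⟩

lemma diffAt {α : Form N k} (hα : HomPolyForm r α) (w : Fin k → Vec N) (x : Vec N) :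
    DifferentiableAt ℝ (fun y => α y w) x := by
  obtain ⟨P, -, hP⟩ := diff_coeff hα w
  rw [hP]
  exact (hasFDerivAt_eval x P).differentiableAt

lemma eulerDeriv {α : Form N k} (hα : HomPolyForm r α) (w : Fin k → Vec N) (x : Vec N) :
    fderiv ℝ (fun y => α y w) x x = (r : ℝ) * α x w := by
  obtain ⟨P, hhom, hP⟩ := diff_coeff hα w
  have hval : α x w = MvPolynomial.eval x P := congrFun hP x
  rw [hP, (hasFDerivAt_eval x P).fderiv, polyD_apply, euler hhom x, hval]

lemma altmap_sum_apply {n : ℕ} {ι : Type*} (s : Finset ι)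
    (f : ι → (Vec N [⋀^Fin n]→ₗ[ℝ] ℝ)) (u : Fin n → Vec N) :
    (∑ i ∈ s, f i) u = ∑ i ∈ s, f i u := by
  classical
  induction s using Finset.induction_on with
  | empty => simp
  | insert _ _ h ih =>
      rw [Finset.sum_insert h, Finset.sum_insert h, AlternatingMap.add_apply, ih]

lemma curry_eq {α : Form N (k + 1)} (y z : Vec N) (u : Fin k → Vec N) :
    α y (Matrix.vecCons z u) = ((α y).curryLeft z) u := rfl

lemma expand_cons {α : Form N (k + 1)} (y z : Vec N) (u : Fin k → Vec N) :
    α y (Matrix.vecCons z u) = ∑ m, z m * α y (Matrix.vecCons (Pi.single m 1) u) := by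
  classical
  have hz' : z = ∑ m, z m • (Pi.single m 1 : Vec N) := by
    funext j
    rw [Finset.sum_apply]
    simp [Pi.single_apply, Finset.sum_ite_eq']
  rw [curry_eq]
  conv_lhs => rw [hz']
  rw [map_sum, altmap_sum_apply]
  refine Finset.sum_congr rfl fun m _ => ?_
  rw [map_smul, AlternatingMap.smul_apply, smul_eq_mul, ← curry_eq]

/-- The key differentiation-by-parts step coming from `i_X α = 0`. -/
lemma fderiv_cons {α : Form N (k + 1)} (hα : HomPolyForm r α)
    (x d : Vec N) (u : Fin k → Vec N)
    (hz : ∀ y : Vec N, α y (Matrix.vecCons y u) = 0) :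
    fderiv ℝ (fun y => α y (Matrix.vecCons x u)) x d = - α x (Matrix.vecCons d u) := by
  classical
  set g : Fin N → Vec N → ℝ := fun m y => α y (Matrix.vecCons (Pi.single m 1) u) with hg
  have hgd : ∀ m, DifferentiableAt ℝ (g m) x := fun m => diffAt hα _ x
  have hF : HasFDerivAt (fun y => α y (Matrix.vecCons y u))
      (∑ m, (x m • fderiv ℝ (g m) x + (g m x) • (ContinuousLinearMap.proj m : Vec N →L[ℝ] ℝ))) x := by
    have h1 : (fun y => α y (Matrix.vecCons y u)) = fun y => ∑ m, y m * g m y :=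
      funext fun y => expand_cons y y u
    rw [h1]
    exact HasFDerivAt.fun_sum fun m _ =>
      ((ContinuousLinearMap.proj m : Vec N →L[ℝ] ℝ).hasFDerivAt.mul ((hgd m).hasFDerivAt))
  have h0' : (fun y => α y (Matrix.vecCons y u)) = fun _ => (0 : ℝ) := funext hz
  rw [h0'] at hF
  have hzero := hF.unique (hasFDerivAt_const (0 : ℝ) x)
  have happ := congrArg (fun (L : Vec N →L[ℝ] ℝ) => L d) hzero
  simp only [ContinuousLinearMap.sum_apply, ContinuousLinearMap.add_apply,
    ContinuousLinearMap.smul_apply, ContinuousLinearMap.proj_apply,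
    ContinuousLinearMap.zero_apply, smul_eq_mul] at happ
  have htarget : HasFDerivAt (fun y => α y (Matrix.vecCons x u))
      (∑ m, x m • fderiv ℝ (g m) x) x := by
    have h2 : (fun y => α y (Matrix.vecCons x u)) = fun y => ∑ m, x m * g m y :=
      funext fun y => expand_cons y x u
    rw [h2]
    exact HasFDerivAt.fun_sum fun m _ => ((hgd m).hasFDerivAt.const_mul (x m))
  rw [htarget.fderiv]
  have hdval : α x (Matrix.vecCons d u) = ∑ m, d m * g m x := expand_cons x d u
  simp only [ContinuousLinearMap.sum_apply, ContinuousLinearMap.smul_apply, smul_eq_mul]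
  have hsplit : ∑ m, (x m * (fderiv ℝ (g m) x) d + g m x * d m)
      = (∑ m, x m * (fderiv ℝ (g m) x) d) + ∑ m, d m * g m x := by
    rw [Finset.sum_add_distrib]
    congr 1
    exact Finset.sum_congr rfl fun m _ => mul_comm _ _
  rw [hsplit] at happ
  rw [hdval]
  linarith

end Forms
section Alt

variable {N k r : ℕ}

/-- The multilinear map `v ↦ (∂_{v 0} α(v 1, …, v k))(x)`. -/
noncomputable def Fm (α : Form N k) (hα : HomPolyForm r α) (x : Vec N) :
    MultilinearMap ℝ (fun _ : Fin (k + 1) => Vec N) ℝ where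
  toFun v := fderiv ℝ (fun y => α y (Fin.tail v)) x (v 0)
  map_update_add' := by
    intro inst v i a b
    have hinst : inst = (instDecidableEqFin (k + 1)) :=
      Subsingleton.elim _ _
    subst hinst
    induction i using Fin.cases with
    | zero =>
        simp only [Fin.tail_update_zero, Function.update_self]
        exact ContinuousLinearMap.map_add _ a b
    | succ i =>
        have h0 : ∀ c : Vec N, Function.update v i.succ c 0 = v 0 :=
          fun c => Function.update_of_ne (Fin.succ_ne_zero i).symm c v
        simp only [Fin.tail_update_succ, h0]
        have hadd : (fun y => α y (Function.update (Fin.tail v) i (a + b)))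
            = fun y => α y (Function.update (Fin.tail v) i a)
              + α y (Function.update (Fin.tail v) i b) := by
          funext y
          exact AlternatingMap.map_update_add _ _ _ _ _
        rw [hadd, fderiv_fun_add (diffAt hα _ x) (diffAt hα _ x)]
        rw [ContinuousLinearMap.add_apply]
  map_update_smul' := by
    intro inst v i c a
    have hinst : inst = (instDecidableEqFin (k + 1)) :=
      Subsingleton.elim _ _
    subst hinst
    induction i using Fin.cases with
    | zero =>
        simp only [Fin.tail_update_zero, Function.update_self]
        exact ContinuousLinearMap.map_smul _ c a
    | succ i =>
        have h0 : ∀ c : Vec N, Function.update v i.succ c 0 = v 0 :=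
          fun c => Function.update_of_ne (Fin.succ_ne_zero i).symm c v
        simp only [Fin.tail_update_succ, h0]
        have hsmul : (fun y => α y (Function.update (Fin.tail v) i (c • a)))
            = fun y => c • α y (Function.update (Fin.tail v) i a) := by
          funext y
          exact AlternatingMap.map_update_smul _ _ _ _ _
        rw [hsmul, fderiv_fun_const_smul (diffAt hα _ x) c]
        rw [ContinuousLinearMap.smul_apply]

lemma sign_cast_sq (e : Equiv.Perm (Fin k)) :
    ((Equiv.Perm.sign e : ℤ) : ℝ) * ((Equiv.Perm.sign e : ℤ) : ℝ) = 1 := by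
  rcases Int.units_eq_one_or (Equiv.Perm.sign e) with h | h <;> rw [h] <;> norm_num

/-- The per-permutation computation for the alternatization of `Fm`. -/
lemma Fm_perm_term (α : Form N k) (hα : HomPolyForm r α) (x : Vec N)
    (w : Fin (k + 1) → Vec N) (p : Fin (k + 1)) (e : Equiv.Perm (Fin k)) :
    (Equiv.Perm.sign (Equiv.Perm.decomposeFin.symm (p, e))) •
      ((Fm α hα x).domDomCongr (Equiv.Perm.decomposeFin.symm (p, e))) w
    = (-1 : ℝ) ^ (p : ℕ) *
        fderiv ℝ (fun y => α y (fun j => w (p.succAbove j))) x (w p) := by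
  classical
  induction p using Fin.cases with
  | zero =>
      have ht0 : (Fin.tail fun i => w (Equiv.Perm.decomposeFin.symm ((0 : Fin (k + 1)), e) i))
          = (fun j => w ((0 : Fin (k + 1)).succAbove j)) ∘ e := by
        funext j
        show w (Equiv.Perm.decomposeFin.symm ((0 : Fin (k + 1)), e) j.succ)
          = w ((0 : Fin (k + 1)).succAbove (e j))
        rw [Equiv.Perm.decomposeFin_symm_apply_succ]
        simp [Equiv.swap_self, Fin.succAbove_zero]
      have hσ0 : Equiv.Perm.decomposeFin.symm ((0 : Fin (k + 1)), e) 0 = 0 :=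
        Equiv.Perm.decomposeFin_symm_apply_zero _ _
      have hfun : (fun y => α y
            (Fin.tail fun i => w (Equiv.Perm.decomposeFin.symm ((0 : Fin (k + 1)), e) i)))
          = fun y => ((Equiv.Perm.sign e : ℤ) : ℝ) *
              α y (fun j => w ((0 : Fin (k + 1)).succAbove j)) := by
        funext y
        rw [ht0, AlternatingMap.map_perm, Units.smul_def, zsmul_eq_mul]
      have h1 : ((Fm α hα x).domDomCongr
            (Equiv.Perm.decomposeFin.symm ((0 : Fin (k + 1)), e))) w
          = ((Equiv.Perm.sign e : ℤ) : ℝ) *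
              fderiv ℝ (fun y => α y (fun j => w ((0 : Fin (k + 1)).succAbove j))) x (w 0) := by
        calc ((Fm α hα x).domDomCongr (Equiv.Perm.decomposeFin.symm ((0 : Fin (k + 1)), e))) w
            = fderiv ℝ (fun y => α y
                (Fin.tail fun i => w (Equiv.Perm.decomposeFin.symm ((0 : Fin (k + 1)), e) i))) x
                (w (Equiv.Perm.decomposeFin.symm ((0 : Fin (k + 1)), e) 0)) := rfl
          _ = _ := by
              rw [hσ0, hfun, fderiv_const_mul (diffAt hα _ x),
                ContinuousLinearMap.smul_apply, smul_eq_mul]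
      have hsign : Equiv.Perm.sign (Equiv.Perm.decomposeFin.symm ((0 : Fin (k + 1)), e))
          = Equiv.Perm.sign e := by
        rw [Equiv.Perm.decomposeFin.symm_sign, if_pos rfl, one_mul]
      rw [h1, hsign, Units.smul_def, zsmul_eq_mul, ← mul_assoc, sign_cast_sq]
      simp
  | succ i =>
      have ht1 : (Fin.tail fun i' => w (Equiv.Perm.decomposeFin.symm (i.succ, e) i'))
          = (fun j => w (i.succ.succAbove j)) ∘ ((Fin.cycleRange i) * e) := by
        funext j
        show w (Equiv.Perm.decomposeFin.symm (i.succ, e) j.succ)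
          = w (i.succ.succAbove ((Fin.cycleRange i) (e j)))
        rw [Equiv.Perm.decomposeFin_symm_apply_succ, Fin.succAbove_cycleRange]
      have hσ0 : Equiv.Perm.decomposeFin.symm (i.succ, e) 0 = i.succ :=
        Equiv.Perm.decomposeFin_symm_apply_zero _ _
      have hfun : (fun y => α y
            (Fin.tail fun i' => w (Equiv.Perm.decomposeFin.symm (i.succ, e) i')))
          = fun y => ((Equiv.Perm.sign ((Fin.cycleRange i) * e) : ℤ) : ℝ) *
              α y (fun j => w (i.succ.succAbove j)) := by
        funext y
        rw [ht1, AlternatingMap.map_perm, Units.smul_def, zsmul_eq_mul]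
      have h1 : ((Fm α hα x).domDomCongr (Equiv.Perm.decomposeFin.symm (i.succ, e))) w
          = ((Equiv.Perm.sign ((Fin.cycleRange i) * e) : ℤ) : ℝ) *
              fderiv ℝ (fun y => α y (fun j => w (i.succ.succAbove j))) x (w i.succ) := by
        calc ((Fm α hα x).domDomCongr (Equiv.Perm.decomposeFin.symm (i.succ, e))) w
            = fderiv ℝ (fun y => α y
                (Fin.tail fun i' => w (Equiv.Perm.decomposeFin.symm (i.succ, e) i'))) x
                (w (Equiv.Perm.decomposeFin.symm (i.succ, e) 0)) := rfl
          _ = _ := by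
              rw [hσ0, hfun, fderiv_const_mul (diffAt hα _ x),
                ContinuousLinearMap.smul_apply, smul_eq_mul]
      have hsign : Equiv.Perm.sign (Equiv.Perm.decomposeFin.symm (i.succ, e))
          = - Equiv.Perm.sign e := by
        rw [Equiv.Perm.decomposeFin.symm_sign, if_neg (Fin.succ_ne_zero i), neg_one_mul]
      rw [h1, hsign, Units.smul_def]
      have hc : ((- Equiv.Perm.sign e : ℤˣ) : ℤ) = -(Equiv.Perm.sign e : ℤ) := by simp
      rw [hc, zsmul_eq_mul]
      have hsplit : ((Equiv.Perm.sign ((Fin.cycleRange i) * e) : ℤ) : ℝ)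
          = (-1 : ℝ) ^ (i : ℕ) * ((Equiv.Perm.sign e : ℤ) : ℝ) := by
        rw [map_mul, Fin.sign_cycleRange]
        push_cast
        ring
      rw [hsplit, Fin.val_succ, pow_succ]
      have hsq := sign_cast_sq e
      push_cast
      linear_combination (-((-1 : ℝ) ^ (i : ℕ) *
        (fderiv ℝ (fun y => α y fun j => w (i.succ.succAbove j)) x) (w i.succ))) * hsq

/-- `extDeriv` satisfies its defining formula for forms with polynomial coefficients. -/
lemma extDeriv_spec (α : Form N k) (hα : HomPolyForm r α) (x : Vec N)
    (v : Fin (k + 1) → Vec N) :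
    extDeriv α x v = ∑ i : Fin (k + 1),
      (-1 : ℝ) ^ (i : ℕ) * fderiv ℝ (fun y => α y (fun j => v (i.succAbove j))) x (v i) := by
  classical
  have hex : ∃ η : Vec N [⋀^Fin (k + 1)]→ₗ[ℝ] ℝ, ∀ w : Fin (k + 1) → Vec N,
      η w = ∑ i : Fin (k + 1),
        (-1 : ℝ) ^ (i : ℕ) * fderiv ℝ (fun y => α y (fun j => w (i.succAbove j))) x (w i) := by
    refine ⟨(k.factorial : ℝ)⁻¹ • MultilinearMap.alternatization (Fm α hα x), fun w => ?_⟩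
    rw [AlternatingMap.smul_apply, MultilinearMap.alternatization_apply]
    rw [Finset.univ_perm_fin_succ, ← Finset.univ_product_univ]
    simp only [Finset.sum_map, Equiv.toEmbedding_apply, Finset.sum_product]
    have hsum : ∀ p : Fin (k + 1),
        (∑ e : Equiv.Perm (Fin k),
          (Equiv.Perm.sign (Equiv.Perm.decomposeFin.symm (p, e))) •
            ((Fm α hα x).domDomCongr (Equiv.Perm.decomposeFin.symm (p, e))) w)
        = (k.factorial : ℝ) * ((-1 : ℝ) ^ (p : ℕ) *
            fderiv ℝ (fun y => α y (fun j => w (p.succAbove j))) x (w p)) := by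
      intro p
      rw [Finset.sum_congr rfl fun e _ => Fm_perm_term α hα x w p e]
      rw [Finset.sum_const, Finset.card_univ, Fintype.card_perm, Fintype.card_fin,
        nsmul_eq_mul]
    rw [Finset.sum_congr rfl fun p _ => hsum p, ← Finset.mul_sum, smul_eq_mul, ← mul_assoc,
      inv_mul_cancel₀ (by exact_mod_cast k.factorial_ne_zero), one_mul]
  rw [extDeriv, dif_pos hex]
  exact hex.choose_spec v

end Alt
section Main

variable {N k r : ℕ}

lemma cons_eq_comp_cycleRange {K : ℕ} (v : Fin (K + 1) → Vec N) (j : Fin (K + 1)) :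
    Matrix.vecCons (v j) (fun m => v (j.succAbove m)) = v ∘ (j.cycleRange).symm := by
  funext m
  induction m using Fin.cases with
  | zero =>
      show v j = v (j.cycleRange.symm 0)
      rw [Fin.cycleRange_symm_zero]
  | succ m =>
      show Matrix.vecCons (v j) (fun m => v (j.succAbove m)) m.succ
        = v (j.cycleRange.symm m.succ)
      rw [Matrix.cons_val_succ, Fin.cycleRange_symm_succ]

lemma alt_cons_sign {K : ℕ} (β : Vec N [⋀^Fin (K + 1)]→ₗ[ℝ] ℝ) (v : Fin (K + 1) → Vec N)
    (j : Fin (K + 1)) :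
    β (Matrix.vecCons (v j) (fun m => v (j.succAbove m))) = (-1 : ℝ) ^ (j : ℕ) * β v := by
  rw [cons_eq_comp_cycleRange, AlternatingMap.map_perm, Equiv.Perm.sign_symm,
    Fin.sign_cycleRange, Units.smul_def]
  have hcast : (((-1 : ℤˣ) ^ (j : ℕ) : ℤˣ) : ℤ) = (-1 : ℤ) ^ (j : ℕ) := by
    rw [Units.val_pow_eq_pow_val, Units.val_neg, Units.val_one]
  rw [hcast, zsmul_eq_mul]
  push_cast
  ring

lemma term_succ {K : ℕ} (α : Form N (K + 1)) (hα : HomPolyForm r α)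
    (h0 : ∀ x, ∀ v : Fin (K + 1) → Vec N, (∃ i, v i = x) → α x v = 0)
    (x : Vec N) (v : Fin (K + 1) → Vec N) (j : Fin (K + 1)) :
    fderiv ℝ (fun y => α y (fun m => Matrix.vecCons x v (j.succ.succAbove m))) x (v j)
      = -((-1 : ℝ) ^ (j : ℕ) * α x v) := by
  have htuple : (fun m : Fin (K + 1) => Matrix.vecCons x v (j.succ.succAbove m))
      = Matrix.vecCons x (fun m' => v (j.succAbove m')) := by
    funext m
    induction m using Fin.cases with
    | zero =>
        rw [Fin.succ_succAbove_zero]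
        simp
    | succ m' =>
        rw [Fin.succ_succAbove_succ]
        simp [Matrix.cons_val_succ]
  rw [htuple]
  have hz : ∀ y, α y (Matrix.vecCons y (fun m' => v (j.succAbove m'))) = 0 :=
    fun y => h0 y _ ⟨0, rfl⟩
  rw [fderiv_cons hα x (v j) _ hz, alt_cons_sign (α x) v j]

lemma key (α : Form N k) (hα : HomPolyForm r α)
    (h0 : ∀ x, ∀ v : Fin k → Vec N, (∃ i, v i = x) → α x v = 0)
    (x : Vec N) (v : Fin k → Vec N) :
    extDeriv α x (Matrix.vecCons x v) = ((r : ℝ) + (k : ℝ)) * α x v := by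
  rw [extDeriv_spec α hα, Fin.sum_univ_succ]
  have h₀ : (fun j : Fin k => Matrix.vecCons x v ((0 : Fin (k + 1)).succAbove j)) = v := by
    funext j
    rw [Fin.succAbove_zero, Matrix.cons_val_succ]
  have hz : (-1 : ℝ) ^ (((0 : Fin (k + 1))) : ℕ) *
      fderiv ℝ (fun y => α y fun j => Matrix.vecCons x v ((0 : Fin (k + 1)).succAbove j)) x
        (Matrix.vecCons x v 0) = (r : ℝ) * α x v := by
    rw [h₀]
    simp only [Matrix.cons_val_zero, Fin.val_zero, pow_zero, one_mul]
    exact eulerDeriv hα v x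
  rw [hz]
  cases k with
  | zero =>
      simp only [Finset.univ_eq_empty, Finset.sum_empty, add_zero, Nat.cast_zero]
  | succ K =>
      have hterm : ∀ j : Fin (K + 1),
          (-1 : ℝ) ^ ((j.succ : Fin (K + 2)) : ℕ) *
            fderiv ℝ (fun y => α y fun m => Matrix.vecCons x v (Fin.succAbove j.succ m)) x
              (Matrix.vecCons x v j.succ) = α x v := by
        intro j
        rw [Matrix.cons_val_succ, term_succ α hα h0 x v j, Fin.val_succ]
        have h2 : (-1 : ℝ) ^ (j : ℕ) * (-1 : ℝ) ^ (j : ℕ) = 1 := by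
          rw [← pow_add]
          exact Even.neg_one_pow ⟨(j : ℕ), rfl⟩
        linear_combination (α x v) * h2
      rw [Finset.sum_congr rfl fun j _ => hterm j, Finset.sum_const, Finset.card_univ,
        Fintype.card_fin, nsmul_eq_mul]
      push_cast
      ring

end Main

/-- If `(r, k) ≠ (0, 0)` and `α ∈ H_r Λᵏ` satisfies `i_X α = 0` (encoded: `α` vanishes on any
tuple of vectors one of which is the Euler vector `x`), then `α = i_X ((r+k)⁻¹ dα)`; in
particular `α` lies in `i_X (H_{r-1} Λ^{k+1})`. -/
theorem stmt8 (n k r : ℕ) (hrk : (r, k) ≠ (0, 0)) (α : Form (n + 1) k)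
    (hα : HomPolyForm r α)
    (h0 : ∀ x, ∀ v : Fin k → Vec (n + 1), (∃ i, v i = x) → α x v = 0) :
    (∀ x, α x = (((r : ℝ) + (k : ℝ))⁻¹ • extDeriv α x).curryLeft x)
    ∧ ∃ β : Form (n + 1) (k + 1), HomPolyForm (r - 1) β ∧ ∀ x, α x = (β x).curryLeft x := by
  classical
  have h1 : r + k ≠ 0 := by
    intro h
    apply hrk
    obtain ⟨hr, hk⟩ : r = 0 ∧ k = 0 := by omega
    rw [hr, hk]
  have hne : ((r : ℝ) + (k : ℝ)) ≠ 0 := by exact_mod_cast h1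
  have hcurry : ∀ x, α x = (((r : ℝ) + (k : ℝ))⁻¹ • extDeriv α x).curryLeft x := by
    intro x
    ext v
    rw [AlternatingMap.curryLeft_apply_apply, AlternatingMap.smul_apply, smul_eq_mul,
      key α hα h0 x v, ← mul_assoc, inv_mul_cancel₀ hne, one_mul]
  refine ⟨hcurry, ⟨fun x => ((r : ℝ) + (k : ℝ))⁻¹ • extDeriv α x, ?_, hcurry⟩⟩
  intro w
  choose P hhom heval using hα
  refine ⟨MvPolynomial.C (((r : ℝ) + (k : ℝ))⁻¹) * ∑ i : Fin (k + 1),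
      MvPolynomial.C ((-1 : ℝ) ^ (i : ℕ)) * ∑ m, MvPolynomial.C (w i m) *
        MvPolynomial.pderiv m (P (fun j => w (i.succAbove j))), ?_, ?_⟩
  · apply MvPolynomial.IsHomogeneous.C_mul
    apply MvPolynomial.IsHomogeneous.sum
    intro i _
    apply MvPolynomial.IsHomogeneous.C_mul
    apply MvPolynomial.IsHomogeneous.sum
    intro m _
    apply MvPolynomial.IsHomogeneous.C_mul
    exact isHomogeneous_pderiv (hhom _) m
  · intro x
    have hD : ∀ i : Fin (k + 1),
        fderiv ℝ (fun y => α y (fun j => w (i.succAbove j))) x (w i)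
          = ∑ m, MvPolynomial.eval x
              (MvPolynomial.pderiv m (P (fun j => w (i.succAbove j)))) * w i m := by
      intro i
      have hfun : (fun y => α y (fun j => w (i.succAbove j)))
          = fun y => MvPolynomial.eval y (P (fun j => w (i.succAbove j))) :=
        funext fun y => (heval _ y).symm
      rw [hfun, (hasFDerivAt_eval x _).fderiv, polyD_apply]
    have hβ : (((r : ℝ) + (k : ℝ))⁻¹ • extDeriv α x) w
        = ((r : ℝ) + (k : ℝ))⁻¹ * ∑ i : Fin (k + 1), (-1 : ℝ) ^ (i : ℕ) *
            ∑ m, MvPolynomial.eval x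
              (MvPolynomial.pderiv m (P (fun j => w (i.succAbove j)))) * w i m := by
      rw [AlternatingMap.smul_apply, smul_eq_mul, extDeriv_spec α (fun v => ⟨P v, hhom v, heval v⟩) x w]
      congr 1
      exact Finset.sum_congr rfl fun i _ => by rw [hD i]
    rw [hβ]
    simp only [map_mul, map_sum, MvPolynomial.eval_C]
    congr 1
    refine Finset.sum_congr rfl fun i _ => ?_
    congr 1
    exact Finset.sum_congr rfl fun m _ => by ring
end FEEC
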